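/- Abstract cone version of the extremality criterion: Let V be a finite-dimensional real vector space, K ⊆ V a closed convex salient cone, D ∈ K, A ∈ interior(K)^∨-positive direction, and ℓ : V → R a linear functional with ℓ(D) < 0, ℓ(A) > 0, and such that for every decomposition D = D_1 + D_2 with D_i ∈ K and D_i not a nonnegative multiple of D, one has ℓ(D_1) ≤ (1/2)ℓ(D) or ℓ(D_2) ≤ (1/2)ℓ(D). If additionally for all s > 0 and i, D_i − sD ∉ K, then assuming nD_1 + A − ((n/2) − 1/d)D ∈ K for all large n with −ℓ(D)/ℓ(A) ≥ d > 0 leads to D_1 − (1/2)D ∈ K, a contradiction; hence D spans an extremal ray of K. -/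

import Mathlib

/-- Abstract cone version of the extremality criterion (Lemma 4.2):
K a closed convex salient cone in a finite-dimensional real vector space,
D ∈ K, ℓ a linear functional with ℓ(D) < 0, ℓ(A) > 0, -ℓ(D)/ℓ(A) ≥ d > 0,
such that for every decomposition D = D₁ + D₂ into elements of K neither of
which is a nonnegative multiple of D: one of ℓ(D_i) ≤ (1/2)ℓ(D), D_i - sD ∉ K
for all s > 0, and n•D₁ + A - (n/2 - 1/d)•D ∈ K for all large n. Then D spans
an extremal ray of K. -/
theorem stmt_10 {V : Type*} [NormedAddCommGroup V] [NormedSpace ℝ V]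
    [FiniteDimensional ℝ V]
    (K : Set V) (hclosed : IsClosed K)
    (hscale : ∀ x ∈ K, ∀ r : ℝ, 0 ≤ r → r • x ∈ K)
    (hadd : ∀ x ∈ K, ∀ y ∈ K, x + y ∈ K)
    (hsalient : ∀ x ∈ K, -x ∈ K → x = 0)
    (D A : V) (hD : D ∈ K)
    (ℓ : V →ₗ[ℝ] ℝ) (hlD : ℓ D < 0) (hlA : 0 < ℓ A)
    (d : ℝ) (hd : 0 < d) (hratio : d ≤ -ℓ D / ℓ A)
    (hhalf : ∀ D₁ D₂, D₁ ∈ K → D₂ ∈ K → D = D₁ + D₂ →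
      (¬ ∃ t : ℝ, 0 ≤ t ∧ D₁ = t • D) → (¬ ∃ t : ℝ, 0 ≤ t ∧ D₂ = t • D) →
      (ℓ D₁ ≤ (1 / 2) * ℓ D ∨ ℓ D₂ ≤ (1 / 2) * ℓ D))
    (hnosub : ∀ D₁ D₂, D₁ ∈ K → D₂ ∈ K → D = D₁ + D₂ →
      (¬ ∃ t : ℝ, 0 ≤ t ∧ D₁ = t • D) → (¬ ∃ t : ℝ, 0 ≤ t ∧ D₂ = t • D) →
      ∀ s : ℝ, 0 < s → D₁ - s • D ∉ K ∧ D₂ - s • D ∉ K)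
    (hEn : ∀ D₁ D₂, D₁ ∈ K → D₂ ∈ K → D = D₁ + D₂ →
      (¬ ∃ t : ℝ, 0 ≤ t ∧ D₁ = t • D) → (¬ ∃ t : ℝ, 0 ≤ t ∧ D₂ = t • D) →
      ∃ N : ℕ, ∀ n : ℕ, N ≤ n →
        (n : ℝ) • D₁ + A - ((n : ℝ) / 2 - 1 / d) • D ∈ K) :
    ∀ D₁ D₂, D₁ ∈ K → D₂ ∈ K → D = D₁ + D₂ →
      (∃ t : ℝ, 0 ≤ t ∧ D₁ = t • D) ∧ (∃ t : ℝ, 0 ≤ t ∧ D₂ = t • D) := by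
  intro D₁ D₂ h1 h2 hsum
  have hDne : D ≠ 0 := by
    intro h; rw [h] at hlD; simp at hlD
  -- if one summand is a nonneg multiple of D, so is the other
  have key : ∀ X Y : V, X ∈ K → Y ∈ K → D = X + Y →
      (∃ t : ℝ, 0 ≤ t ∧ X = t • D) → (∃ t : ℝ, 0 ≤ t ∧ Y = t • D) := by
    intro X Y hX hY hXY ⟨t, ht, hXt⟩
    have hYeq : Y = (1 - t) • D := by
      have : Y = D - X := by rw [hXY]; abel
      rw [this, hXt, sub_smul, one_smul]
    rcases le_or_gt t 1 with h | h
    · exact ⟨1 - t, by linarith, hYeq⟩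
    · exfalso
      have hneg : -Y ∈ K := by
        have : -Y = (t - 1) • D := by rw [hYeq]; rw [← neg_smul]; ring_nf
        rw [this]; exact hscale D hD _ (by linarith)
      have := hsalient Y hY hneg
      rw [this] at hYeq
      have : (1 - t) = 0 ∨ D = 0 := by
        rcases smul_eq_zero.mp hYeq.symm with h | h
        · exact Or.inl h
        · exact Or.inr h
      rcases this with h' | h'
      · linarith
      · exact hDne h'
  by_cases hm1 : ∃ t : ℝ, 0 ≤ t ∧ D₁ = t • D
  · exact ⟨hm1, key D₁ D₂ h1 h2 hsum hm1⟩
  by_cases hm2 : ∃ t : ℝ, 0 ≤ t ∧ D₂ = t • D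
  · refine ⟨key D₂ D₁ h2 h1 (by rw [hsum]; abel) hm2, hm2⟩
  exfalso
  obtain ⟨N, hN⟩ := hEn D₁ D₂ h1 h2 hsum hm1 hm2
  -- the sequence (1/n) • E n tends to D₁ - (1/2) • D
  set f : ℕ → V := fun n => D₁ + ((n : ℝ))⁻¹ • A - ((1:ℝ)/2 - ((n:ℝ))⁻¹ * (1/d)) • D
    with hf
  have hfK : ∀ n : ℕ, max N 1 ≤ n → f n ∈ K := by
    intro n hn
    have hn1 : (1:ℕ) ≤ n := le_trans (le_max_right _ _) hn
    have hnpos : (0:ℝ) < (n:ℝ) := by exact_mod_cast Nat.lt_of_lt_of_le Nat.zero_lt_one hn1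
    have hEnK := hN n (le_trans (le_max_left _ _) hn)
    have heq : f n = ((n:ℝ))⁻¹ • ((n : ℝ) • D₁ + A - ((n : ℝ) / 2 - 1 / d) • D) := by
      rw [hf]
      simp only [smul_sub, smul_add, smul_smul]
      rw [inv_mul_cancel₀ (ne_of_gt hnpos), one_smul]
      congr 2
      field_simp
    rw [heq]
    exact hscale _ hEnK _ (le_of_lt (inv_pos.mpr hnpos))
  have hlim : Filter.Tendsto f Filter.atTop (nhds (D₁ - (1/2 : ℝ) • D)) := by
    have hinv : Filter.Tendsto (fun n : ℕ => ((n:ℝ))⁻¹) Filter.atTop (nhds 0) :=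
      tendsto_inv_atTop_zero.comp tendsto_natCast_atTop_atTop
    have h1t : Filter.Tendsto (fun n : ℕ => ((n:ℝ))⁻¹ • A) Filter.atTop (nhds 0) := by
      simpa using hinv.smul_const A
    have h2t : Filter.Tendsto (fun n : ℕ => ((1:ℝ)/2 - ((n:ℝ))⁻¹ * (1/d)) • D)
        Filter.atTop (nhds ((1/2 : ℝ) • D)) := by
      have : Filter.Tendsto (fun n : ℕ => (1:ℝ)/2 - ((n:ℝ))⁻¹ * (1/d)) Filter.atTop
          (nhds ((1:ℝ)/2)) := by
        have := (hinv.mul_const (1/d)).const_sub ((1:ℝ)/2)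
        simpa using this
      exact this.smul_const D
    have := ((tendsto_const_nhds (x := D₁) (f := Filter.atTop)).add h1t).sub h2t
    simp only [hf]
    simpa using this
  have hmem : D₁ - (1/2 : ℝ) • D ∈ K :=
    hclosed.mem_of_tendsto hlim
      (Filter.eventually_atTop.mpr ⟨max N 1, hfK⟩)
  exact (hnosub D₁ D₂ h1 h2 hsum hm1 hm2 (1/2) (by norm_num)).1 hmem
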